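/- arXiv:1402.1381 — 2 statements merged into one kernel-verified Lean document; each statement's English description precedes it below -/
import Mathlib

section
/- Let N ≥ 1 be an integer and ρ ∈ L¹(ℝ³) with ρ ≥ 0 a.e. and ∫ρ = N. Define J(t) = (1/N) ∫_{ℝ²} ρ(t, y) dy for t ∈ ℝ, Y(t) = ∫_{−∞}^{t} J(s) ds, and for each k ∈ ℤ let φ_k(x) = (ρ(x)/N)^{1/2} e^{2πi k Y(x¹)}, where x = (x¹,x²,x³). Then the family {φ_k}_{k∈ℤ} is orthonormal in L²(ℝ³; ℂ): ∫_{ℝ³} φ_j(x) \overline{φ_k(x)} dx = 1 if j = k and 0 otherwise. -/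
noncomputable section

open MeasureTheory
open scoped Real

/-- The marginal `J(t) = (1/N) ∫_{ℝ²} ρ(t, y) dy`. -/
def marginalJ (N : ℕ) (ρ : (Fin 3 → ℝ) → ℝ) (t : ℝ) : ℝ :=
  (1 / (N : ℝ)) * ∫ y : Fin 2 → ℝ, ρ (Fin.cons t y)

/-- The cumulative marginal `Y(t) = ∫_{-∞}^t J(s) ds`. -/
def cumulY (N : ℕ) (ρ : (Fin 3 → ℝ) → ℝ) (t : ℝ) : ℝ :=
  ∫ s in Set.Iio t, marginalJ N ρ s

/-- The orbital `φ_k(x) = (ρ(x)/N)^{1/2} e^{2πik Y(x¹)}`. -/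
def orbital (N : ℕ) (ρ : (Fin 3 → ℝ) → ℝ) (k : ℤ) (x : Fin 3 → ℝ) : ℂ :=
  (Real.sqrt (ρ x / N) : ℂ) *
    Complex.exp (2 * π * Complex.I * k * (cumulY N ρ (x 0) : ℂ))

section OneD

open scoped ENNReal NNReal

variable {g : ℝ → ℝ}

lemma prim_Iic (t : ℝ) : (∫ s in Set.Iio t, g s) = ∫ s in Set.Iic t, g s :=
  setIntegral_congr_set Iio_ae_eq_Iic

lemma prim_cont (hg : Integrable g) :
    Continuous fun t => ∫ s in Set.Iio t, g s := by
  have h : (fun t => ∫ s in Set.Iio t, g s)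
      = fun t => (∫ s in (0:ℝ)..t, g s) + ∫ s in Set.Iic (0:ℝ), g s := by
    funext t
    rw [prim_Iic, ← intervalIntegral.integral_Iic_sub_Iic hg.integrableOn hg.integrableOn, sub_add_cancel]
  rw [h]
  exact (hg.continuous_primitive 0).add continuous_const

lemma prim_mono (hg : Integrable g) (h0 : 0 ≤ᵐ[volume] g) :
    Monotone fun t => ∫ s in Set.Iio t, g s := by
  intro s t hst
  simp only
  rw [prim_Iic, prim_Iic, ← sub_nonneg,
    intervalIntegral.integral_Iic_sub_Iic hg.integrableOn hg.integrableOn,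
    intervalIntegral.integral_of_le hst]
  exact integral_nonneg_of_ae (ae_restrict_of_ae h0)

lemma prim_nonneg (h0 : 0 ≤ᵐ[volume] g) (t : ℝ) :
    0 ≤ ∫ s in Set.Iio t, g s :=
  integral_nonneg_of_ae (ae_restrict_of_ae h0)

lemma prim_tendsto_atTop (hg : Integrable g) :
    Filter.Tendsto (fun t => ∫ s in Set.Iio t, g s) Filter.atTop (nhds (∫ s, g s)) := by
  have h := tendsto_setIntegral_of_monotone (f := g) (μ := volume)
    (s := fun t : ℝ => Set.Iio t) (fun t => measurableSet_Iio)
    (fun a b hab => Set.Iio_subset_Iio hab)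
    (by rw [Set.iUnion_Iio]; exact hg.integrableOn)
  simpa [Set.iUnion_Iio] using h

lemma prim_tendsto_atBot (hg : Integrable g) :
    Filter.Tendsto (fun t => ∫ s in Set.Iio t, g s) Filter.atBot (nhds 0) := by
  have h := tendsto_setIntegral_of_antitone (f := g) (μ := volume)
    (s := fun t : ℝ => Set.Iio (-t)) (fun t => measurableSet_Iio)
    (fun a b hab => Set.Iio_subset_Iio (neg_le_neg hab)) ⟨0, hg.integrableOn⟩
  have hint : ⋂ t : ℝ, Set.Iio (-t) = ∅ := by
    apply Set.eq_empty_iff_forall_notMem.2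
    intro x hx
    have := Set.mem_iInter.1 hx (-x)
    simp at this
  rw [hint] at h
  simp only [Measure.restrict_empty, integral_zero_measure] at h
  have h2 := h.comp Filter.tendsto_neg_atBot_atTop
  simpa [Function.comp_def] using h2

lemma prim_le_one (hg : Integrable g) (h0 : 0 ≤ᵐ[volume] g) (h1 : ∫ s, g s = 1) (t : ℝ) :
    (∫ s in Set.Iio t, g s) ≤ 1 := by
  have htop := prim_tendsto_atTop hg
  rw [h1] at htop
  exact (prim_mono hg h0).ge_of_tendsto htop t

lemma map_primitive (hg : Integrable g) (h0 : 0 ≤ᵐ[volume] g) (h1 : ∫ s, g s = 1) :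
    Measure.map (fun t => ∫ s in Set.Iio t, g s)
        (volume.withDensity fun t => ENNReal.ofReal (g t)) =
      volume.restrict (Set.Ioc (0:ℝ) 1) := by
  set G : ℝ → ℝ := fun t => ∫ s in Set.Iio t, g s with hGdef
  set μ : Measure ℝ := volume.withDensity fun t => ENNReal.ofReal (g t) with hμ
  have hμIic : ∀ t : ℝ, μ (Set.Iic t) = ENNReal.ofReal (G t) := by
    intro t
    rw [hμ, withDensity_apply' _ (Set.Iic t),
      ← ofReal_integral_eq_lintegral_ofReal hg.integrableOn (ae_restrict_of_ae h0), ← prim_Iic]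
  have hμuniv : μ Set.univ = 1 := by
    rw [hμ, withDensity_apply' _ Set.univ, Measure.restrict_univ,
      ← ofReal_integral_eq_lintegral_ofReal hg h0, h1, ENNReal.ofReal_one]
  haveI : IsFiniteMeasure μ := ⟨by rw [hμuniv]; exact ENNReal.one_lt_top⟩
  have hGc : Continuous G := prim_cont hg
  have hGmono : Monotone G := prim_mono hg h0
  have hG1 : ∀ t, G t ≤ 1 := prim_le_one hg h0 h1
  have hmapmeas : ∀ a : ℝ, Measure.map G μ (Set.Iic a) = μ {t | G t ≤ a} := by
    intro a
    rw [Measure.map_apply hGc.measurable measurableSet_Iic]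
    rfl
  haveI : IsFiniteMeasure (volume.restrict (Set.Ioc (0:ℝ) 1)) :=
    ⟨by rw [Measure.restrict_apply_univ]; simp [Real.volume_Ioc]⟩
  refine Measure.ext_of_Iic _ _ fun a => ?_
  rw [hmapmeas a, Measure.restrict_apply measurableSet_Iic]
  have hset : Set.Iic a ∩ Set.Ioc (0:ℝ) 1 = Set.Ioc 0 (min a 1) := by
    ext x
    simp only [Set.mem_inter_iff, Set.mem_Iic, Set.mem_Ioc, le_min_iff]
    tauto
  rw [hset, Real.volume_Ioc, sub_zero]
  rcases le_or_gt 1 a with ha | ha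
  · have huniv : {t | G t ≤ a} = Set.univ :=
      Set.eq_univ_of_forall fun t => le_trans (hG1 t) ha
    rw [huniv, hμuniv, min_eq_right ha, ENNReal.ofReal_one]
  · rw [min_eq_left ha.le]
    by_cases hne : {t : ℝ | G t ≤ a}.Nonempty
    · -- nonempty case
      have htop := prim_tendsto_atTop hg
      rw [h1] at htop
      have hbdd : BddAbove {t : ℝ | G t ≤ a} := by
        obtain ⟨T, hT⟩ := (htop.eventually (eventually_gt_nhds ha)).exists
        refine ⟨T, fun t ht => ?_⟩
        by_contra hTt
        push_neg at hTt
        exact absurd (le_trans (hGmono hTt.le) ht) (not_le.2 hT)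
      have hclosed : IsClosed {t : ℝ | G t ≤ a} := isClosed_le hGc continuous_const
      set c := sSup {t : ℝ | G t ≤ a} with hcdef
      have hcmem : c ∈ {t : ℝ | G t ≤ a} := hclosed.csSup_mem hne hbdd
      have hSc : {t : ℝ | G t ≤ a} = Set.Iic c := by
        ext t
        constructor
        · exact fun ht => le_csSup hbdd ht
        · exact fun ht => le_trans (hGmono ht) hcmem
      have hGca : G c = a := by
        refine le_antisymm hcmem ?_
        have hev : ∀ᶠ t in nhdsWithin c (Set.Ioi c), a ≤ G t := by
          filter_upwards [self_mem_nhdsWithin] with t ht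
          by_contra hlt
          push_neg at hlt
          exact absurd (le_csSup hbdd hlt.le) (not_le.2 ht)
        exact ge_of_tendsto (hGc.continuousAt.tendsto.mono_left nhdsWithin_le_nhds) hev
      rw [hSc, hμIic c, hGca]
    · -- empty case
      have ha0 : a ≤ 0 := by
        by_contra h
        push_neg at h
        obtain ⟨t, ht⟩ := ((prim_tendsto_atBot hg).eventually (eventually_lt_nhds h)).exists
        exact hne ⟨t, ht.le⟩
      rw [Set.not_nonempty_iff_eq_empty.1 hne]
      simp [ENNReal.ofReal_eq_zero.2 ha0]


lemma key1D (hg : Integrable g) (h0 : 0 ≤ᵐ[volume] g) (h1 : ∫ s, g s = 1)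
    {m : ℤ} (hm : m ≠ 0) :
    ∫ t, (g t : ℂ) *
        Complex.exp (2 * π * Complex.I * m * ((∫ s in Set.Iio t, g s : ℝ) : ℂ)) = 0 := by
  set c : ℂ := 2 * π * Complex.I * m with hc
  have hc0 : c ≠ 0 := by
    have hm' : (m : ℂ) ≠ 0 := Int.cast_ne_zero.2 hm
    have hπ : ((π : ℝ) : ℂ) ≠ 0 := Complex.ofReal_ne_zero.2 Real.pi_ne_zero
    simp [hc, hm', hπ, Complex.I_ne_zero, mul_ne_zero]
  set G : ℝ → ℝ := fun t => ∫ s in Set.Iio t, g s with hGdef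
  have hGm : Measurable G := (prim_cont hg).measurable
  set μ : Measure ℝ := volume.withDensity fun t => ENNReal.ofReal (g t) with hμ
  have hmap : Measure.map G μ = volume.restrict (Set.Ioc (0:ℝ) 1) := map_primitive hg h0 h1
  have hf_cont : Continuous fun u : ℝ => Complex.exp (c * u) := by continuity
  have step1 : ∫ t, (g t : ℂ) * Complex.exp (c * G t)
      = ∫ t, Complex.exp (c * G t) ∂μ := by
    rw [hμ]
    have hd : (fun t => ENNReal.ofReal (g t)) = fun t => ((g t).toNNReal : ℝ≥0∞) := rfl
    rw [hd, integral_withDensity_eq_integral_smul₀ hg.aemeasurable.real_toNNReal]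
    refine integral_congr_ae ?_
    filter_upwards [h0] with t ht
    simp [NNReal.smul_def, Real.coe_toNNReal _ ht, Complex.real_smul]
  have step2 : ∫ t, Complex.exp (c * G t) ∂μ
      = ∫ u, Complex.exp (c * u) ∂(Measure.map G μ) :=
    (integral_map hGm.aemeasurable hf_cont.aestronglyMeasurable).symm
  rw [step1, step2, hmap]
  have step3 : ∫ u in Set.Ioc (0:ℝ) 1, Complex.exp (c * u)
      = ∫ u in (0:ℝ)..1, Complex.exp (c * u) :=
    (intervalIntegral.integral_of_le zero_le_one).symm
  rw [step3, integral_exp_mul_complex hc0]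
  have hone : Complex.exp c = 1 := by
    rw [hc, show (2 : ℂ) * π * Complex.I * m = m * (2 * π * Complex.I) by ring]
    exact Complex.exp_int_mul_two_pi_mul_I m
  push_cast
  rw [mul_one, mul_zero, hone, Complex.exp_zero, sub_self, zero_div]

end OneD

lemma integral_ofReal'' {α : Type*} [MeasurableSpace α] {μ : Measure α} (f : α → ℝ) :
    (∫ x, ((f x : ℝ) : ℂ) ∂μ) = ((∫ x, f x ∂μ : ℝ) : ℂ) :=
  integral_ofReal

section Main

lemma integral_rho_exp (N : ℕ) (hN : 1 ≤ N) (ρ : (Fin 3 → ℝ) → ℝ)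
    (hint : Integrable ρ) (hpos : ∀ᵐ x : Fin 3 → ℝ, 0 ≤ ρ x)
    (hmass : ∫ x : Fin 3 → ℝ, ρ x = N) (m : ℤ) :
    (∫ x : Fin 3 → ℝ, ((ρ x / N : ℝ) : ℂ) *
        Complex.exp (2 * π * Complex.I * m * (cumulY N ρ (x 0) : ℂ))) =
      if m = 0 then 1 else 0 := by
  have hN0 : (N : ℝ) ≠ 0 := Nat.cast_ne_zero.2 (by omega)
  by_cases hm : m = 0
  · subst hm
    simp only [Int.cast_zero, mul_zero, zero_mul, Complex.exp_zero, mul_one, if_pos rfl]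
    rw [integral_ofReal'' (fun x : Fin 3 → ℝ => ρ x / N), integral_div, hmass, div_self hN0,
      Complex.ofReal_one]
    simp
  · rw [if_neg hm]
    set e := MeasurableEquiv.piFinSuccAbove (fun _ : Fin 3 => ℝ) 0 with he
    have mp : MeasurePreserving e.symm :=
      (volume_preserving_piFinSuccAbove (fun _ : Fin 3 => ℝ) 0).symm
    have hsymm : ∀ p : ℝ × (Fin 2 → ℝ), e.symm p = Fin.cons p.1 p.2 := fun p => by
      simp only [he, MeasurableEquiv.piFinSuccAbove_symm_apply]
      exact Fin.insertNth_zero' p.1 p.2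
    have hρ2 : Integrable (fun p : ℝ × (Fin 2 → ℝ) => ρ (Fin.cons p.1 p.2)) := by
      have h := (mp.integrable_comp_emb e.symm.measurableEmbedding (g := ρ)).2 hint
      refine h.congr (Filter.Eventually.of_forall fun p => ?_)
      rw [Function.comp_apply, hsymm]
    have hρ2' : Integrable (fun p : ℝ × (Fin 2 → ℝ) => ρ (Fin.cons p.1 p.2))
        ((volume : Measure ℝ).prod (volume : Measure (Fin 2 → ℝ))) := by
      rwa [← Measure.volume_eq_prod]
    have hJint : Integrable (marginalJ N ρ) := by
      have h := hρ2'.integral_prod_left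
      exact h.const_mul (1 / (N : ℝ))
    have hpos2 : ∀ᵐ p : ℝ × (Fin 2 → ℝ) ∂((volume : Measure ℝ).prod volume),
        0 ≤ ρ (Fin.cons p.1 p.2) := by
      rw [← mp.map_eq] at hpos
      have h1 := (e.symm.measurableEmbedding.ae_map_iff).1 hpos
      rw [Measure.volume_eq_prod] at h1
      filter_upwards [h1] with p hp
      rwa [hsymm] at hp
    have hJ0 : 0 ≤ᵐ[volume] marginalJ N ρ := by
      filter_upwards [Measure.ae_ae_of_ae_prod hpos2] with t ht
      exact mul_nonneg (by positivity) (integral_nonneg_of_ae ht)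
    have hJ1 : ∫ t, marginalJ N ρ t = 1 := by
      have hii : ∫ t, ∫ y : Fin 2 → ℝ, ρ (Fin.cons t y) = ∫ x, ρ x := by
        rw [integral_integral hρ2']
        rw [← Measure.volume_eq_prod]
        calc ∫ p : ℝ × (Fin 2 → ℝ), ρ (Fin.cons p.1 p.2)
            = ∫ p : ℝ × (Fin 2 → ℝ), ρ (e.symm p) := by
              congr 1; funext p; rw [hsymm]
          _ = ∫ x, ρ x := mp.integral_comp e.symm.measurableEmbedding ρ
      unfold marginalJ
      rw [integral_const_mul, hii, hmass]
      field_simp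
    set c : ℂ := 2 * π * Complex.I * (m : ℂ) with hc
    have hexpnorm : ∀ r : ℝ, ‖Complex.exp (c * (r : ℂ))‖ = 1 := by
      intro r
      have hz : c * (r : ℂ) = ((2 * π * m * r : ℝ) : ℂ) * Complex.I := by
        rw [hc]; push_cast; ring
      rw [hz, Complex.norm_exp_ofReal_mul_I]
    have hYc : Continuous (cumulY N ρ) := prim_cont hJint
    have hexp_cont : Continuous fun x : Fin 3 → ℝ =>
        Complex.exp (c * ((cumulY N ρ (x 0) : ℝ) : ℂ)) :=
      Complex.continuous_exp.comp (continuous_const.mul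
        (Complex.continuous_ofReal.comp (hYc.comp (continuous_apply 0))))
    have hF : Integrable (fun x : Fin 3 → ℝ =>
        ((ρ x / N : ℝ) : ℂ) * Complex.exp (c * ((cumulY N ρ (x 0) : ℝ) : ℂ))) := by
      have hρC : Integrable (fun x : Fin 3 → ℝ => ((ρ x / N : ℝ) : ℂ)) :=
        (hint.div_const (N : ℝ)).ofReal
      have h := Integrable.bdd_mul hρC hexp_cont.aestronglyMeasurable
        (c := 1) (Filter.Eventually.of_forall fun x => (hexpnorm _).le)
      exact h.congr (Filter.Eventually.of_forall fun x => mul_comm _ _)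
    have hFp : Integrable (fun p : ℝ × (Fin 2 → ℝ) =>
        ((ρ (Fin.cons p.1 p.2) / N : ℝ) : ℂ) * Complex.exp (c * ((cumulY N ρ p.1 : ℝ) : ℂ)))
        ((volume : Measure ℝ).prod volume) := by
      have h := (mp.integrable_comp_emb e.symm.measurableEmbedding).2 hF
      rw [Measure.volume_eq_prod] at h
      refine h.congr (Filter.Eventually.of_forall fun p => ?_)
      rw [Function.comp_apply, hsymm]
      simp [Fin.cons_zero]
    have hmain : (∫ x : Fin 3 → ℝ, ((ρ x / N : ℝ) : ℂ) *
          Complex.exp (c * ((cumulY N ρ (x 0) : ℝ) : ℂ)))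
        = ∫ t, ((marginalJ N ρ t : ℝ) : ℂ) *
            Complex.exp (c * ((cumulY N ρ t : ℝ) : ℂ)) := by
      calc ∫ x : Fin 3 → ℝ, ((ρ x / N : ℝ) : ℂ) *
              Complex.exp (c * ((cumulY N ρ (x 0) : ℝ) : ℂ))
          = ∫ p : ℝ × (Fin 2 → ℝ), ((ρ (e.symm p) / N : ℝ) : ℂ) *
              Complex.exp (c * ((cumulY N ρ (e.symm p 0) : ℝ) : ℂ)) :=
            (mp.integral_comp e.symm.measurableEmbedding _).symm
        _ = ∫ p : ℝ × (Fin 2 → ℝ), ((ρ (Fin.cons p.1 p.2) / N : ℝ) : ℂ) *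
              Complex.exp (c * ((cumulY N ρ p.1 : ℝ) : ℂ))
              ∂((volume : Measure ℝ).prod volume) := by
            rw [← Measure.volume_eq_prod]
            congr 1
            funext p
            rw [hsymm]
            simp [Fin.cons_zero]
        _ = ∫ t, ∫ y : Fin 2 → ℝ, ((ρ (Fin.cons t y) / N : ℝ) : ℂ) *
              Complex.exp (c * ((cumulY N ρ t : ℝ) : ℂ)) := integral_prod _ hFp
        _ = ∫ t, ((marginalJ N ρ t : ℝ) : ℂ) *
              Complex.exp (c * ((cumulY N ρ t : ℝ) : ℂ)) := by
            congr 1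
            funext t
            have hJt : marginalJ N ρ t = (∫ y : Fin 2 → ℝ, ρ (Fin.cons t y)) / N := by
              unfold marginalJ; ring
            rw [integral_mul_const, integral_ofReal'' (fun y : Fin 2 → ℝ => ρ (Fin.cons t y) / N),
              integral_div, hJt]
    rw [hmain, hc]
    have := key1D hJint hJ0 hJ1 hm
    exact this

end Main

/-- **Orthonormality of the transported orbitals.** If `ρ ≥ 0` is integrable on `ℝ³`
with `∫ ρ = N ≥ 1`, then the family `{φ_k}_{k ∈ ℤ}` is orthonormal in `L²(ℝ³; ℂ)`. -/
theorem orbitals_orthonormal (N : ℕ) (hN : 1 ≤ N) (ρ : (Fin 3 → ℝ) → ℝ)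
    (hint : Integrable ρ) (hpos : ∀ᵐ x : Fin 3 → ℝ, 0 ≤ ρ x)
    (hmass : ∫ x : Fin 3 → ℝ, ρ x = N) :
    ∀ j k : ℤ,
      ∫ x : Fin 3 → ℝ, orbital N ρ j x * starRingEnd ℂ (orbital N ρ k x) =
        if j = k then 1 else 0 := by
  intro j k
  have key := integral_rho_exp N hN ρ hint hpos hmass (j - k)
  have hae : (fun x : Fin 3 → ℝ => orbital N ρ j x * starRingEnd ℂ (orbital N ρ k x)) =ᵐ[volume]
      fun x : Fin 3 → ℝ => ((ρ x / N : ℝ) : ℂ) *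
        Complex.exp (2 * π * Complex.I * ((j - k : ℤ) : ℂ) * (cumulY N ρ (x 0) : ℂ)) := by
    filter_upwards [hpos] with x hx
    unfold orbital
    have h1 : (starRingEnd ℂ) (Complex.exp (2 * π * Complex.I * k * (cumulY N ρ (x 0) : ℂ)))
        = Complex.exp (-(2 * π * Complex.I * k * (cumulY N ρ (x 0) : ℂ))) := by
      rw [← Complex.exp_conj]
      congr 1
      simp only [map_mul, Complex.conj_I, Complex.conj_ofReal, map_ofNat, map_intCast]
      ring
    rw [map_mul, Complex.conj_ofReal, h1]
    have hsq : (Real.sqrt (ρ x / N) : ℂ) * (Real.sqrt (ρ x / N) : ℂ) = ((ρ x / N : ℝ) : ℂ) := by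
      rw [← Complex.ofReal_mul, Real.mul_self_sqrt (div_nonneg hx (Nat.cast_nonneg N))]
    calc (Real.sqrt (ρ x / N) : ℂ) *
            Complex.exp (2 * π * Complex.I * j * (cumulY N ρ (x 0) : ℂ)) *
          ((Real.sqrt (ρ x / N) : ℂ) *
            Complex.exp (-(2 * π * Complex.I * k * (cumulY N ρ (x 0) : ℂ))))
        = ((Real.sqrt (ρ x / N) : ℂ) * (Real.sqrt (ρ x / N) : ℂ)) *
            (Complex.exp (2 * π * Complex.I * j * (cumulY N ρ (x 0) : ℂ)) *
              Complex.exp (-(2 * π * Complex.I * k * (cumulY N ρ (x 0) : ℂ)))) := by ring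
      _ = ((ρ x / N : ℝ) : ℂ) *
            Complex.exp (2 * π * Complex.I * ((j - k : ℤ) : ℂ) * (cumulY N ρ (x 0) : ℂ)) := by
          rw [hsq, ← Complex.exp_add]
          congr 2
          push_cast
          ring
  rw [integral_congr_ae hae, key]
  simp [sub_eq_zero]

end
end

section
/- Let X be a real vector space and Y a vector space of linear functionals on X that separates the points of X; equip X with the weak topology σ(X,Y) and X × ℝ with the product topology. Let f : X → [0,∞] be proper (not identically +∞). Define f*(ζ) = sup_{x∈X} (ζ(x) − f(x)) for ζ ∈ Y, and f**(x) = sup_{ζ∈Y} (ζ(x) − f*(ζ)) (with the convention t − (+∞) = −∞). Then the epigraph of f** equals the closed convex hull of the epigraph of f: {(x,t) : f**(x) ≤ t} = closure of the convex hull of {(x,t) : f(x) ≤ t}. -/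
set_option maxHeartbeats 1000000


noncomputable section

open scoped ENNReal

section Aux

variable {X : Type*} [AddCommGroup X] [Module ℝ X] (Y : Submodule ℝ (X →ₗ[ℝ] ℝ))

/-- The evaluation pairing `X →ₗ Y →ₗ ℝ`. -/
def evalPairingFenchel : X →ₗ[ℝ] (Y →ₗ[ℝ] ℝ) where
  toFun x := { toFun := fun ζ => ζ.1 x
               map_add' := fun ζ η => rfl
               map_smul' := fun c ζ => rfl }
  map_add' x y := by ext ζ; simp
  map_smul' c x := by ext ζ; simp

theorem mem_of_weak_continuous (g : X →ₗ[ℝ] ℝ)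
    (hg : Continuous fun x : WeakBilin (evalPairingFenchel Y) => g x) : g ∈ Y := by
  -- the preimage of (-1,1) is a neighborhood of 0
  have h0 : (fun x : WeakBilin (evalPairingFenchel Y) => g x) ⁻¹' Set.Ioo (-1) 1 ∈
      nhds (0 : WeakBilin (evalPairingFenchel Y)) := by
    apply hg.continuousAt.preimage_mem_nhds
    change Set.Ioo (-1 : ℝ) 1 ∈ nhds (g (0 : X))
    rw [map_zero]
    exact Ioo_mem_nhds (by norm_num) (by norm_num)
  rw [nhds_induced] at h0
  obtain ⟨U, hU, hUsub⟩ := h0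
  have hzero : (fun ζ : Y => ζ.1 (0 : X)) = (0 : Y → ℝ) := by funext ζ; simp
  change U ∈ nhds (fun ζ : Y => ζ.1 (0 : X)) at hU
  rw [hzero] at hU
  rw [nhds_pi, Filter.mem_pi] at hU
  obtain ⟨I, hIfin, V, hV, hVsub⟩ := hU
  have : Finite ↥I := hIfin
  set L : ↥I → (X →ₗ[ℝ] ℝ) := fun i => (i.1 : X →ₗ[ℝ] ℝ) with hL
  have hker : ⨅ i, LinearMap.ker (L i) ≤ LinearMap.ker g := by
    intro x hx
    simp only [Submodule.mem_iInf, LinearMap.mem_ker] at hx ⊢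
    by_contra hgx
    have hmem : ∀ t : ℝ, |g (t • x)| < 1 := by
      intro t
      have : (t • x : X) ∈ (fun x (ζ : Y) => ζ.1 x) ⁻¹' U := by
        apply Set.mem_preimage.2
        apply hVsub
        intro i hi
        have : (i : Y).1 (t • x) = 0 := by
          rw [map_smul, hx ⟨i, hi⟩, smul_zero]
        simp only [Set.mem_pi] at *
        rw [this]
        exact mem_of_mem_nhds (hV i)
      have := hUsub this
      change -1 < g (t • x) ∧ g (t • x) < 1 at this
      rw [abs_lt]; exact ⟨this.1, this.2⟩
    have := hmem (2 / g x)
    rw [map_smul, smul_eq_mul, div_mul_cancel₀ 2 hgx] at this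
    norm_num at this
  have hspan : g ∈ Submodule.span ℝ (Set.range L) := mem_span_of_iInf_ker_le_ker hker
  refine Submodule.span_le.2 ?_ hspan
  rintro - ⟨i, rfl⟩
  exact (i.1 : Y).2

lemma EReal.sub_sub_cancel_le' (a : ℝ) (b : EReal) : (a : EReal) - ((a : EReal) - b) ≤ b := by
  induction b using EReal.rec with
  | bot => rw [EReal.sub_bot (EReal.coe_ne_bot a), EReal.sub_top]
  | coe b =>
    simp only [← EReal.coe_sub]
    exact EReal.coe_le_coe_iff.2 (le_of_eq (by ring))
  | top => exact le_top

theorem aux_epi (f : X → ℝ≥0∞) (hproper : ∃ x, f x ≠ ⊤)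
    (fstar : Y → EReal)
    (hfstar : ∀ ζ : Y, fstar ζ = ⨆ x : X, ((ζ.1 x : EReal) - ((f x : ℝ≥0∞) : EReal)))
    (fbistar : X → EReal)
    (hfbistar : ∀ x : X, fbistar x = ⨆ ζ : Y, ((ζ.1 x : EReal) - fstar ζ)) :
    {p : WeakBilin (evalPairingFenchel Y) × ℝ | fbistar p.1 ≤ (p.2 : EReal)} =
      closure (convexHull ℝ
        {p : WeakBilin (evalPairingFenchel Y) × ℝ | ((f p.1 : ℝ≥0∞) : EReal) ≤ (p.2 : EReal)}) := by
  set W := WeakBilin (evalPairingFenchel Y)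
  set epi : Set (W × ℝ) := {p : W × ℝ | ((f p.1 : ℝ≥0∞) : EReal) ≤ (p.2 : EReal)} with hepi
  set C := closure (convexHull ℝ epi) with hC
  -- coercion fact
  have hco : ∀ x : X, f x ≠ ⊤ → ((f x : ℝ≥0∞) : EReal) = (((f x).toReal : ℝ) : EReal) := by
    intro x hx
    rw [← EReal.toReal_coe_ennreal]
    exact (EReal.coe_toReal (by simpa [EReal.coe_ennreal_eq_top_iff] using hx)
      (EReal.coe_ennreal_ne_bot _)).symm
  -- continuity of evaluations
  have hcont : ∀ ζ : Y, Continuous fun q : W × ℝ => ζ.1 q.1 :=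
    fun ζ => (WeakBilin.eval_continuous (evalPairingFenchel Y) ζ).comp continuous_fst
  apply Set.Subset.antisymm
  · -- hard direction
    rintro ⟨x₀, t₀⟩ hp
    simp only [Set.mem_setOf_eq] at hp
    by_contra hpc
    haveI : IsTopologicalAddGroup W := by
      refine @WeakBilin.instIsTopologicalAddGroup ℝ X Y _ _ _ _ _ _ (evalPairingFenchel Y) _
    haveI : LocallyConvexSpace ℝ W := by
      refine @WeakBilin.locallyConvexSpace ℝ X Y _ _ _ _ _ _ _ _ (evalPairingFenchel Y)
    obtain ⟨g, u, hgu, hup⟩ := geometric_hahn_banach_closed_point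
      ((convex_convexHull ℝ epi).closure) isClosed_closure hpc
    set ζg : X →ₗ[ℝ] ℝ := (g : (W × ℝ) →ₗ[ℝ] ℝ).comp (LinearMap.inl ℝ W ℝ) with hζg
    set c : ℝ := g (0, 1) with hcdef
    have hgdecomp : ∀ (x : W) (t : ℝ), g (x, t) = ζg x + t * c := by
      intro x t
      have : ((x, t) : W × ℝ) = (x, 0) + t • ((0 : W), (1 : ℝ)) := by
        simp [Prod.ext_iff]
      rw [this, map_add, map_smul]
      simp only [hζg, LinearMap.coe_comp, Function.comp_apply,
        ContinuousLinearMap.coe_coe, smul_eq_mul]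
      rfl
    have hζgY : ζg ∈ Y := by
      apply mem_of_weak_continuous
      exact g.continuous.comp (continuous_id.prodMk continuous_const)
    have hepiC : epi ⊆ C := (subset_convexHull ℝ epi).trans subset_closure
    -- points of the epigraph give strict inequalities
    have hdom : ∀ x : X, f x ≠ ⊤ → ∀ s : ℝ, (f x).toReal ≤ s → ζg x + s * c < u := by
      intro x hx s hs
      have hmem : ((x, s) : W × ℝ) ∈ epi := by
        simp only [hepi, Set.mem_setOf_eq]
        rw [hco x hx]
        exact EReal.coe_le_coe_iff.2 hs
      have := hgu _ (hepiC hmem)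
      exact lt_of_eq_of_lt (hgdecomp x s).symm this
    obtain ⟨x', hx'⟩ := hproper
    have hc : c ≤ 0 := by
      by_contra hcpos
      push_neg at hcpos
      set s := max (f x').toReal ((u - ζg x') / c) with hs
      have h1 := hdom x' hx' s (le_max_left _ _)
      have h2 : (u - ζg x') / c ≤ s := le_max_right _ _
      have h3 : u - ζg x' ≤ s * c := by
        rw [div_le_iff₀ hcpos] at h2; linarith
      linarith
    have hfinal : (t₀ : EReal) < fbistar x₀ := by
      rcases lt_or_eq_of_le hc with hclt | hc0
      · -- non-vertical case
        have hmc : (0 : ℝ) < -c := neg_pos.2 hclt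
        set ζ' : X →ₗ[ℝ] ℝ := (-c)⁻¹ • ζg with hζ'
        set η : Y := ⟨ζ', Y.smul_mem _ hζgY⟩ with hη
        set α : ℝ := u * (-c)⁻¹ with hα
        have hζ'app : ∀ x : X, ζ' x = (-c)⁻¹ * ζg x := by
          intro x; simp [hζ', smul_eq_mul]
        have hstarle : fstar η ≤ (α : EReal) := by
          rw [hfstar]
          apply iSup_le
          intro x
          by_cases hx : f x = ⊤
          · rw [hx, EReal.coe_ennreal_top, EReal.sub_top]; exact bot_le
          · rw [hco x hx, ← EReal.coe_sub]
            apply EReal.coe_le_coe_iff.2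
            have h1 := hdom x hx (f x).toReal le_rfl
            have hinv : (0 : ℝ) < (-c)⁻¹ := inv_pos.2 hmc
            have hcne : c ≠ 0 := ne_of_lt hclt
            rw [hζ'app]
            have key : (ζg x + (f x).toReal * c) * (-c)⁻¹
                = (-c)⁻¹ * ζg x - (f x).toReal := by field_simp; ring
            calc (-c)⁻¹ * ζg x - (f x).toReal = (ζg x + (f x).toReal * c) * (-c)⁻¹ := key.symm
              _ ≤ u * (-c)⁻¹ := mul_le_mul_of_nonneg_right h1.le hinv.le
        have hlt : (t₀ : EReal) < (ζ' x₀ : EReal) - (α : EReal) := by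
          rw [← EReal.coe_sub]
          apply EReal.coe_lt_coe_iff.2
          have h1 : u < ζg x₀ + t₀ * c := by rw [← hgdecomp]; exact hup
          have hinv : (0 : ℝ) < (-c)⁻¹ := inv_pos.2 hmc
          have hcne : c ≠ 0 := ne_of_lt hclt
          rw [hζ'app x₀]
          have key : (ζg x₀ + t₀ * c) * (-c)⁻¹ = (-c)⁻¹ * ζg x₀ - t₀ := by field_simp; ring
          have h2 := mul_lt_mul_of_pos_right h1 hinv
          rw [key] at h2
          linarith
        calc (t₀ : EReal) < (ζ' x₀ : EReal) - (α : EReal) := hlt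
          _ ≤ (ζ' x₀ : EReal) - fstar η := EReal.sub_le_sub le_rfl hstarle
          _ ≤ fbistar x₀ := by rw [hfbistar x₀]; exact le_iSup (fun ζ : Y => ((ζ.1 x₀ : EReal) - fstar ζ)) η
      · -- vertical case
        have hu : u < ζg x₀ := by
          have h1 : u < ζg x₀ + t₀ * c := by rw [← hgdecomp]; exact hup
          rw [hc0] at h1; linarith
        set d : ℝ := ζg x₀ - u with hd
        have hdpos : 0 < d := by simp [hd]; linarith
        obtain ⟨n, hn⟩ := exists_nat_gt (t₀ / d)
        have hnd : t₀ < n * d := by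
          rw [div_lt_iff₀ hdpos] at hn; linarith
        set η : Y := ⟨(n : ℝ) • ζg, Y.smul_mem _ hζgY⟩ with hη
        have hηapp : ∀ x : X, η.1 x = n * ζg x := by
          intro x; simp [hη, smul_eq_mul]
        have hstarle : fstar η ≤ ((n * u : ℝ) : EReal) := by
          rw [hfstar]
          apply iSup_le
          intro x
          by_cases hx : f x = ⊤
          · rw [hx, EReal.coe_ennreal_top, EReal.sub_top]; exact bot_le
          · rw [hco x hx, hηapp, ← EReal.coe_sub]
            apply EReal.coe_le_coe_iff.2
            have h1 := hdom x hx (f x).toReal le_rfl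
            rw [hc0] at h1
            have h2 : ζg x < u := by linarith
            have h3 : (0:ℝ) ≤ (f x).toReal := ENNReal.toReal_nonneg
            have h4 : (n:ℝ) * ζg x ≤ n * u :=
              mul_le_mul_of_nonneg_left h2.le (Nat.cast_nonneg n)
            linarith
        have hlt : (t₀ : EReal) < (η.1 x₀ : EReal) - ((n * u : ℝ) : EReal) := by
          rw [hηapp x₀, ← EReal.coe_sub]
          apply EReal.coe_lt_coe_iff.2
          have : (n:ℝ) * ζg x₀ - n * u = n * d := by rw [hd]; ring
          rw [this]; exact hnd
        calc (t₀ : EReal) < (η.1 x₀ : EReal) - ((n * u : ℝ) : EReal) := hlt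
          _ ≤ (η.1 x₀ : EReal) - fstar η := EReal.sub_le_sub le_rfl hstarle
          _ ≤ fbistar x₀ := by rw [hfbistar x₀]; exact le_iSup (fun ζ : Y => ((ζ.1 x₀ : EReal) - fstar ζ)) η
    exact absurd (lt_of_lt_of_le hfinal hp) (lt_irrefl _)
  · -- easy direction
    intro p hp
    simp only [Set.mem_setOf_eq]
    rw [show fbistar p.1 = _ from hfbistar p.1, iSup_le_iff]
    intro ζ
    set S : Set (W × ℝ) := {q : W × ℝ | (ζ.1 q.1 : EReal) - fstar ζ ≤ (q.2 : EReal)} with hS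
    have hsub : epi ⊆ S := by
      intro q hq
      simp only [hS, Set.mem_setOf_eq]
      calc (ζ.1 q.1 : EReal) - fstar ζ
          ≤ (ζ.1 q.1 : EReal) - ((ζ.1 q.1 : EReal) - ((f q.1 : ℝ≥0∞) : EReal)) := by
            apply EReal.sub_le_sub le_rfl
            rw [hfstar]
            exact le_iSup (fun x : X => ((ζ.1 x : EReal) - ((f x : ℝ≥0∞) : EReal))) q.1
        _ ≤ ((f q.1 : ℝ≥0∞) : EReal) := EReal.sub_sub_cancel_le' _ _
        _ ≤ (q.2 : EReal) := hq
    have hSgood : IsClosed S ∧ Convex ℝ S := by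
      by_cases hbot : fstar ζ = ⊥
      · have : S = ∅ := by
          ext q
          simp only [hS, Set.mem_setOf_eq, hbot, Set.mem_empty_iff_false, iff_false]
          rw [EReal.sub_bot (EReal.coe_ne_bot _)]
          exact fun h => (EReal.coe_ne_top q.2) (top_le_iff.1 h)
        rw [this]; exact ⟨isClosed_empty, convex_empty⟩
      by_cases htop : fstar ζ = ⊤
      · have : S = Set.univ := by
          ext q
          simp only [hS, Set.mem_setOf_eq, htop, Set.mem_univ, iff_true, EReal.sub_top]
          exact bot_le
        rw [this]; exact ⟨isClosed_univ, convex_univ⟩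
      obtain ⟨b, hb⟩ : ∃ b : ℝ, fstar ζ = (b : EReal) :=
        ⟨(fstar ζ).toReal, (EReal.coe_toReal htop hbot).symm⟩
      constructor
      · have : S = {q : W × ℝ | ζ.1 q.1 - b ≤ q.2} := by
          ext q
          simp only [hS, Set.mem_setOf_eq, hb, ← EReal.coe_sub, EReal.coe_le_coe_iff]
        rw [this]
        exact isClosed_le ((hcont ζ).sub continuous_const) continuous_snd
      · have : S = {q : W × ℝ | ζ.1 q.1 - q.2 ≤ b} := by
          ext q
          simp only [hS, Set.mem_setOf_eq, hb, ← EReal.coe_sub, EReal.coe_le_coe_iff]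
          constructor <;> intro h <;> linarith
        rw [this]
        refine convex_halfSpace_le ?_ b
        exact { map_add := by intro q r; simp; rw [show ζ.1 (q.1 + r.1) = ζ.1 q.1 + ζ.1 r.1 from map_add ζ.1 (q.1 : X) r.1]; ring
                map_smul := by intro a q; simp [smul_eq_mul]; rw [show ζ.1 (a • q.1) = a * ζ.1 q.1 from map_smul ζ.1 a (q.1 : X)]; ring }
    obtain ⟨hSclosed, hSconvex⟩ := hSgood
    exact closure_minimal (convexHull_min hsub hSconvex) hSclosed hp

end Aux


/-- **Fenchel biconjugation.** Let `X` be a real vector space and `Y` a point-separating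
vector space of linear functionals on `X`; equip `X` with the weak topology `σ(X,Y)` and
`X × ℝ` with the product topology.  For a proper `f : X → [0,∞]`, the epigraph of the
biconjugate `f**` is the closed convex hull of the epigraph of `f`
(with the conventions of `EReal` arithmetic, in which `t - (+∞) = -∞`). -/
theorem epi_biconjugate_eq_closure_convexHull
    (X : Type*) [AddCommGroup X] [Module ℝ X]
    (Y : Submodule ℝ (X →ₗ[ℝ] ℝ))
    (hsep : ∀ x : X, x ≠ 0 → ∃ ζ ∈ Y, ζ x ≠ 0)
    (f : X → ℝ≥0∞) (hproper : ∃ x, f x ≠ ⊤)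
    (fstar : Y → EReal)
    (hfstar : ∀ ζ : Y, fstar ζ = ⨆ x : X, ((ζ.1 x : EReal) - ((f x : ℝ≥0∞) : EReal)))
    (fbistar : X → EReal)
    (hfbistar : ∀ x : X, fbistar x = ⨆ ζ : Y, ((ζ.1 x : EReal) - fstar ζ)) :
    {p : X × ℝ | fbistar p.1 ≤ (p.2 : EReal)} =
      @closure (X × ℝ)
        (@instTopologicalSpaceProd X ℝ
          (TopologicalSpace.induced (fun (x : X) (ζ : Y) => ζ.1 x) inferInstance)
          inferInstance)
        (convexHull ℝ {p : X × ℝ | ((f p.1 : ℝ≥0∞) : EReal) ≤ (p.2 : EReal)}) := by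
  have hτ : (TopologicalSpace.induced (fun (x : X) (ζ : Y) => ζ.1 x)
        (inferInstance : TopologicalSpace (Y → ℝ)))
      = WeakBilin.instTopologicalSpace (evalPairingFenchel Y) := rfl
  rw [hτ]
  exact aux_epi Y f hproper fstar hfstar fbistar hfbistar

end
end
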